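/- Let Φ be the composite map acting on 20V configurations on T_m as follows: (i) reverse the orientation of every vertical edge (vertical flip), (ii) reflect the whole configuration through the horizontal line y = (m−1)/2, (iii) apply the shear (x,y) ↦ (x, y−x) (which sends the reflected edge directions (1,1), (1,0), (0,1) to (1,0), (1,−1), (0,1)). Then Φ is a bijection from the set of DWBC3 configurations on T_m onto a set of ice-rule configurations on T_m (the 20V₂ model), and for every k ∈ {1,…,m}, Φ maps configurations with DWBC3 statistic k to configurations whose 20V₂ statistic (the position, counted from the bottom, of the topmost vertex on the line x = 0 visited by a path of the image configuration) equals m+1−k. Consequently Z_{m,k}^{20V3} = Z_{m,m+1−k}^{20V2} for all k = 1, 2, …, m. -/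

import Mathlib

open Real

namespace TwentyV

/-- The three edge directions of the triangular lattice: `(1,0)`, `(0,1)`, `(1,-1)`. -/
def dir : Fin 3 → ℤ × ℤ := ![(1, 0), (0, 1), (1, -1)]

/-- The triangular domain `T_m`: vertices `(x,y)` with `x ≤ 0`, `y ≤ m-1`, `x+y ≥ 0`. -/
def Tri (m : ℕ) : Set (ℤ × ℤ) := {v | v.1 ≤ 0 ∧ v.2 ≤ (m : ℤ) - 1 ∧ 0 ≤ v.1 + v.2}

/-- An orientation of the edges of the triangular lattice: the edge joining `v` and
`v + dir d` is recorded at base point `v`, and the value `true` means that it is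
oriented from `v` towards `v + dir d`. -/
abbrev Orientation := ℤ × ℤ → Fin 3 → Bool

/-- The edge `(v, d)` is incident to the triangle `T_m`. -/
def Incident (m : ℕ) (v : ℤ × ℤ) (d : Fin 3) : Prop := v ∈ Tri m ∨ v + dir d ∈ Tri m

/-- The number of edges incoming at the vertex `u`. -/
def inDeg (o : Orientation) (u : ℤ × ℤ) : ℕ :=
  (Finset.univ.filter fun d : Fin 3 => o (u - dir d) d = true).card +
    (Finset.univ.filter fun d : Fin 3 => o u d = false).card

/-- Ice rule: every vertex of `T_m` has exactly three incoming (hence three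
outgoing) incident edges. -/
def IceRule (m : ℕ) (o : Orientation) : Prop := ∀ u ∈ Tri m, inDeg o u = 3

/-- DWBC3 boundary conditions on `T_m`: all East boundary half-edges (at vertices
`(0,y)`) point into the domain, all North boundary half-edges (at vertices
`(x,m-1)`) point out of the domain, and the diagonal boundary half-edges (at
vertices `(-y,y)`) point into the domain on the upper half and out of it on the
lower half (for odd `m` the central vertex gets one incoming and one outgoing
half-edge).  In addition, all edges not incident to `T_m` are normalized to
`true`, so that the set of configurations is finite. -/
def DWBC3 (m : ℕ) (o : Orientation) : Prop :=
  (∀ y : ℤ, 0 ≤ y → y ≤ (m : ℤ) - 1 → o (0, y) 0 = false ∧ o (0, y) 2 = false) ∧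
  (∀ x : ℤ, 1 - (m : ℤ) ≤ x → x ≤ 0 →
      o (x, (m : ℤ) - 1) 1 = true ∧ o (x - 1, (m : ℤ)) 2 = false) ∧
  (∀ y : ℤ, 0 ≤ y → y ≤ (m : ℤ) - 1 →
      (o (-y - 1, y) 0 = true ↔ (m : ℤ) - 1 ≤ 2 * y) ∧
      (o (-y, y - 1) 1 = true ↔ (m : ℤ) ≤ 2 * y)) ∧
  (∀ v d, ¬ Incident m v d → o v d = true)

/-- The set of 20V configurations with DWBC3 on `T_m`. -/
def Config (m : ℕ) : Set Orientation := {o | IceRule m o ∧ DWBC3 m o}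

/-- `Z_m^{20V3}`: the number of 20V configurations with DWBC3 on `T_m`. -/
noncomputable def Z (m : ℕ) : ℕ := (Config m).ncard

end TwentyV
namespace TwentyV

/-- The edge `(v, d)` is occupied by an osculating Schröder path step: under the
standard bijection, horizontal edges are traversed rightwards (step `(1,0)`),
vertical edges downwards (step `(0,-1)`), diagonal edges down-rightwards
(step `(1,-1)`). -/
def Occupied (o : Orientation) (v : ℤ × ℤ) (d : Fin 3) : Prop :=
  if d = 1 then o v d = false else o v d = true

/-- The vertex `u` is visited by a path, i.e. some incident edge is occupied. -/
def Visited (o : Orientation) (u : ℤ × ℤ) : Prop :=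
  ∃ d : Fin 3, Occupied o (u - dir d) d ∨ Occupied o u d

/-- The statistic of the configuration `o` equals `k`: the topmost vertex on the
East boundary line `x = 0` visited by a path is `(0, k-1)`, i.e. has position `k`
counted from the bottom. -/
def HasStat (m : ℕ) (o : Orientation) (k : ℕ) : Prop :=
  Visited o (0, (k : ℤ) - 1) ∧
    ∀ j : ℤ, (k : ℤ) - 1 < j → j ≤ (m : ℤ) - 1 → ¬ Visited o (0, j)

/-- The refined number `Z_{m,k}^{20V3}` of DWBC3 configurations with statistic `k`. -/
noncomputable def Zref (m k : ℕ) : ℕ := {o ∈ Config m | HasStat m o k}.ncard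

/-- The refined generating polynomial `Z_m^{20V3}(τ) = ∑_{k=1}^m Z_{m,k}^{20V3} τ^{k-1}`. -/
noncomputable def Zpoly (m : ℕ) (τ : ℝ) : ℝ :=
  ∑ k ∈ Finset.Icc 1 m, (Zref m k : ℝ) * τ ^ (k - 1)

end TwentyV

namespace TwentyV

/-- The composite map `Φ = Shear ∘ Reflection ∘ VerticalFlip` on 20V configurations of
`T_m`, expressed on edge orientations.  The vertical flip complements the vertical
path steps, i.e. reverses all vertical arrows; the reflection through the line
`y = (m-1)/2` and the shear `(x,y) ↦ (x, y-x)` then transport the arrow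
configuration by the point map `φ(x,y) = (x, m-1-y-x)`, which maps horizontal edges
to diagonal ones, diagonal edges to horizontal ones, and vertical edges to vertical
ones with their geometric direction inverted (so that, together with the vertical
flip, the arrow on the vertical edge based at `(x, m-2-y-x)` is reversed). -/
def Phi (m : ℕ) (o : Orientation) : Orientation := fun u d =>
  if d = 0 then o (u.1, (m : ℤ) - 1 - u.2 - u.1) 2
  else if d = 1 then !(o (u.1, (m : ℤ) - 2 - u.2 - u.1) 1)
  else o (u.1, (m : ℤ) - 1 - u.2 - u.1) 0

/-- `Z_{m,k}^{20V2}`: the number of configurations of the image model (the 20V₂ model,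
i.e. the image of the DWBC3 configurations under `Φ`) whose statistic equals `k`. -/
noncomputable def Zref2 (m k : ℕ) : ℕ :=
  {o ∈ Phi m '' Config m | HasStat m o k}.ncard


/-! ### Auxiliary lemmas -/

lemma inDeg_eq (o : Orientation) (x y : ℤ) : inDeg o (x, y) =
  (((if o (x-1, y) 0 = true then 1 else 0) + (if o (x, y-1) 1 = true then 1 else 0)) + (if o (x-1, y+1) 2 = true then 1 else 0)) +
  (((if o (x,y) 0 = false then 1 else 0) + (if o (x,y) 1 = false then 1 else 0)) + (if o (x,y) 2 = false then 1 else 0)) := by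
  rw [inDeg, Finset.card_filter, Finset.card_filter, Fin.sum_univ_three, Fin.sum_univ_three]
  norm_num [dir, Prod.mk_sub_mk, Matrix.cons_val_two]

lemma Phi_Phi (m : ℕ) (o : Orientation) : Phi m (Phi m o) = o := by
  funext u d
  obtain ⟨x, y⟩ := u
  fin_cases d <;> simp [Phi] <;> ring_nf

lemma Phi_injective (m : ℕ) : Function.Injective (Phi m) :=
  Function.LeftInverse.injective (g := Phi m) (Phi_Phi m)

lemma inDeg_Phi (m : ℕ) (o : Orientation) (x y : ℤ) :
    inDeg (Phi m o) (x, y) = inDeg o (x, (m : ℤ) - 1 - y - x) := by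
  rw [inDeg_eq, inDeg_eq]
  simp only [Phi, if_true, if_false, show (2:Fin 3) ≠ 0 by decide, show (2:Fin 3) ≠ 1 by decide]
  norm_num
  ring_nf

lemma iceRule_Phi (m : ℕ) (o : Orientation) (ho : o ∈ Config m) : IceRule m (Phi m o) := by
  rintro ⟨x, y⟩ hu
  simp only [Tri, Set.mem_setOf_eq] at hu
  rw [inDeg_Phi]
  exact ho.1 (x, (m : ℤ) - 1 - y - x) (by simp only [Tri, Set.mem_setOf_eq]; omega)

lemma sub_dir1 (x j : ℤ) : (x, j) - dir 1 = (x, j - 1) := by norm_num [dir, Prod.ext_iff]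

lemma visited_zero_iff (o : Orientation) (j : ℤ) :
    Visited o (0, j) ↔
      (o (-1, j) 0 = true ∨ o (0, j) 0 = true ∨ o (0, j - 1) 1 = false ∨
        o (0, j) 1 = false ∨ o (-1, j + 1) 2 = true ∨ o (0, j) 2 = true) := by
  have e0 : ((0:ℤ), j) - dir 0 = (-1, j) := by norm_num [dir, Prod.ext_iff]
  have e2 : ((0:ℤ), j) - dir 2 = (-1, j + 1) := by norm_num [dir, Prod.ext_iff, Matrix.cons_val_two]
  constructor
  · rintro ⟨d, h⟩
    fin_cases d <;> simp [Occupied, dir, Prod.mk_sub_mk] at h <;> tauto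
  · rintro (h|h|h|h|h|h)
    · exact ⟨0, Or.inl (by rw [e0]; simpa [Occupied])⟩
    · exact ⟨0, Or.inr (by simpa [Occupied])⟩
    · exact ⟨1, Or.inl (by rw [sub_dir1]; simpa [Occupied])⟩
    · exact ⟨1, Or.inr (by simpa [Occupied])⟩
    · exact ⟨2, Or.inl (by rw [e2]; simpa [Occupied])⟩
    · exact ⟨2, Or.inr (by simpa [Occupied])⟩

lemma column (m : ℕ) (o : Orientation) (ho : o ∈ Config m) (y : ℤ)
    (h0 : 0 ≤ y) (h1 : y ≤ (m:ℤ) - 1) :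
    ((if o (-1, y) 0 = true then 1 else 0) + (if o (0, y-1) 1 = true then 1 else 0)
      + (if o (-1, y+1) 2 = true then 1 else 0) + (if o (0, y) 1 = false then 1 else 0) : ℕ) = 1 := by
  have h := ho.1 (0, y) ⟨by norm_num, h1, by simpa⟩
  rw [inDeg_eq] at h
  obtain ⟨hA, hC⟩ := ho.2.1 y h0 h1
  rw [hA, hC] at h
  norm_num at h
  omega

/-- If the vertical edge above `(0,y)` is occupied (points downwards), then the
other three potentially incoming path edges at `(0,y)` are unoccupied. -/
lemma column_forced (m : ℕ) (o : Orientation) (ho : o ∈ Config m) (y : ℤ)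
    (h0 : 0 ≤ y) (h1 : y ≤ (m:ℤ) - 1) (hc : o (0, y) 1 = false) :
    o (-1, y) 0 = false ∧ o (0, y-1) 1 = false ∧ o (-1, y+1) 2 = false := by
  have hcol := column m o ho y h0 h1
  rcases hA : o (-1, y) 0 <;> rcases hb : o (0, y-1) 1 <;> rcases hB : o (-1, y+1) 2 <;>
    simp_all



lemma stat_Phi (m : ℕ) (hm : 1 ≤ m) (o : Orientation) (ho : o ∈ Config m) (k : ℕ)
    (hk1 : 1 ≤ k) (hk2 : k ≤ m) (hs : HasStat m o k) :
    HasStat m (Phi m o) (m + 1 - k) := by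
  obtain ⟨hv, hmax⟩ := hs
  have hK0 : (0:ℤ) ≤ (k:ℤ) - 1 := by omega
  have hKM : (k:ℤ) - 1 ≤ (m:ℤ) - 1 := by omega
  -- facts above the topmost visited vertex
  have habove : ∀ y : ℤ, (k:ℤ) - 1 < y → y ≤ (m:ℤ) - 1 →
      o (-1, y) 0 = false ∧ o (0, y-1) 1 = true ∧ o (0, y) 1 = true ∧ o (-1, y+1) 2 = false := by
    intro y hy1 hy2
    have h := hmax y hy1 hy2
    rw [visited_zero_iff] at h
    push_neg at h
    simp only [Bool.not_eq_true, Bool.not_eq_false] at h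
    tauto
  -- the vertical edge above the topmost visited vertex is unoccupied
  have hc : o (0, (k:ℤ) - 1) 1 = true := by
    rcases eq_or_lt_of_le hKM with hEq | hlt
    · have h := (ho.2.2.1 0 (by omega) le_rfl).1
      rw [hEq]; simpa using h
    · have h := (habove ((k:ℤ) - 1 + 1) (by omega) (by omega)).2.1
      simpa using h
  -- the vertical edge below the topmost visited vertex is occupied
  have hbK : o (0, (k:ℤ) - 1 - 1) 1 = false := by
    have h := hv
    rw [visited_zero_iff] at h
    obtain ⟨hE0, hE2⟩ := ho.2.1 ((k:ℤ) - 1) hK0 hKM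
    have hcol := column m o ho ((k:ℤ) - 1) hK0 hKM
    rcases hA : o (-1, (k:ℤ) - 1) 0 <;> rcases hb : o (0, (k:ℤ) - 1 - 1) 1 <;>
      rcases hB : o (-1, (k:ℤ) - 1 + 1) 2 <;> simp_all
  -- all edges below are forced
  have key : ∀ y : ℤ, y ≤ (k:ℤ) - 1 → 0 ≤ y →
      o (0, y - 1) 1 = false ∧ (y < (k:ℤ) - 1 →
        o (-1, y) 0 = false ∧ o (-1, y + 1) 2 = false ∧ o (0, y) 1 = false) := by
    refine Int.le_induction_down ?_ ?_
    · exact fun _ => ⟨hbK, by omega⟩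
    · intro n hn ih h0
      have hprev := (ih (by omega)).1
      have hforced := column_forced m o ho (n - 1) h0 (by omega) hprev
      exact ⟨hforced.2.1, fun _ => ⟨hforced.1, hforced.2.2, hprev⟩⟩
  -- cast bookkeeping
  have hcast : ((m + 1 - k : ℕ) : ℤ) = (m:ℤ) + 1 - (k:ℤ) := by omega
  constructor
  · -- the vertex (0, m-k) is visited by Φ(o)
    rw [hcast, show (m:ℤ) + 1 - (k:ℤ) - 1 = (m:ℤ) - k by ring]
    refine ⟨1, Or.inl ?_⟩
    rw [sub_dir1]
    simp only [Occupied, Phi, show (1:Fin 3) ≠ 0 by decide, if_false, if_pos rfl, if_true,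
      Bool.not_eq_false]
    rw [show ((m:ℤ) - 2 - ((m:ℤ) - (k:ℤ) - 1) - 0) = (k:ℤ) - 1 by ring]
    simp [hc]
  · -- no vertex above it is visited
    intro j hj1 hj2
    rw [hcast] at hj1
    rw [visited_zero_iff]
    push_neg
    simp only [Bool.not_eq_true, Bool.not_eq_false]
    have hy0 : (0:ℤ) ≤ (m:ℤ) - 1 - j := by omega
    have hyK : (m:ℤ) - 1 - j < (k:ℤ) - 1 := by omega
    have hkey := key ((m:ℤ) - 1 - j) (by omega) hy0
    have hb' := hkey.1
    obtain ⟨hA', hB', hc'⟩ := hkey.2 hyK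
    obtain ⟨hE0, hE2⟩ := ho.2.1 ((m:ℤ) - 1 - j) hy0 (by omega)
    have g1 : Phi m o (-1, j) 0 = o (-1, (m:ℤ) - 1 - j + 1) 2 := by
      simp only [Phi, if_pos rfl]; norm_num
    have g2 : Phi m o (0, j) 0 = o (0, (m:ℤ) - 1 - j) 2 := by
      simp only [Phi, if_pos rfl]; norm_num
    have g3 : Phi m o (0, j - 1) 1 = !(o (0, (m:ℤ) - 1 - j) 1) := by
      simp only [Phi, show (1:Fin 3) ≠ 0 by decide, if_false, if_pos rfl, if_true]
      rw [show ((m:ℤ) - 2 - (j - 1) - 0) = (m:ℤ) - 1 - j by ring]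
    have g4 : Phi m o (0, j) 1 = !(o (0, (m:ℤ) - 1 - j - 1) 1) := by
      simp only [Phi, show (1:Fin 3) ≠ 0 by decide, if_false, if_pos rfl, if_true]
      rw [show ((m:ℤ) - 2 - j - 0) = (m:ℤ) - 1 - j - 1 by ring]
    have g5 : Phi m o (-1, j + 1) 2 = o (-1, (m:ℤ) - 1 - j) 0 := by
      simp only [Phi, show (2:Fin 3) ≠ 0 by decide, show (2:Fin 3) ≠ 1 by decide, if_false]
      rw [show ((m:ℤ) - 1 - (j + 1) - (-1)) = (m:ℤ) - 1 - j by ring]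
    have g6 : Phi m o (0, j) 2 = o (0, (m:ℤ) - 1 - j) 0 := by
      simp only [Phi, show (2:Fin 3) ≠ 0 by decide, show (2:Fin 3) ≠ 1 by decide, if_false]
      norm_num
    rw [g1, g2, g3, g4, g5, g6, hb', hA', hB', hc', hE0, hE2]
    simp



lemma stat_exists (m : ℕ) (hm : 1 ≤ m) (o : Orientation) (ho : o ∈ Config m) :
    ∃ k : ℕ, 1 ≤ k ∧ k ≤ m ∧ HasStat m o k := by
  classical
  set P : ℕ → Prop := fun y => Visited o (0, (y:ℤ)) with hP
  have hP0 : P 0 := by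
    have h := (ho.2.2.2.1 0 le_rfl (by omega)).2
    simp only [neg_zero, zero_sub] at h
    have h0 : o (0, (0:ℤ) - 1) 1 = false := by
      rcases hb : o (0, (0:ℤ) - 1) 1
      · rfl
      · exfalso; rw [show ((0:ℤ) - 1) = 0 - 1 by ring] at hb
        have := h.mp (by simpa using hb); omega
    show Visited o (0, ((0:ℕ):ℤ))
    rw [visited_zero_iff]
    tauto
  let k0 := Nat.findGreatest P (m - 1)
  have hks : P k0 := Nat.findGreatest_spec (Nat.zero_le _) hP0
  have hkb : k0 ≤ m - 1 := Nat.findGreatest_le _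
  refine ⟨k0 + 1, by omega, by omega, ?_, ?_⟩
  · rw [show ((k0 + 1 : ℕ) : ℤ) - 1 = (k0 : ℤ) by push_cast; ring]
    exact hks
  · intro j hj1 hj2 hv
    have hj0 : 0 ≤ j := by omega
    obtain ⟨n, rfl⟩ := Int.eq_ofNat_of_zero_le hj0
    have hgt : k0 < n := by omega
    have hle : n ≤ m - 1 := by omega
    exact Nat.findGreatest_is_greatest hgt hle hv

lemma stat_unique (m : ℕ) (o : Orientation) (a b : ℕ) (ha2 : a ≤ m) (hb2 : b ≤ m)
    (hA : HasStat m o a) (hB : HasStat m o b) : a = b := by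
  rcases Nat.lt_trichotomy a b with h | h | h
  · exact absurd hB.1 (hA.2 ((b:ℤ) - 1) (by omega) (by omega))
  · exact h
  · exact absurd hA.1 (hB.2 ((a:ℤ) - 1) (by omega) (by omega))

/-- `Φ` is a bijection from the DWBC3 configurations on `T_m` onto a
set of ice-rule configurations on `T_m` (the 20V₂ model), and it maps configurations
with DWBC3 statistic `k` to configurations with statistic `m+1-k`; consequently
`Z_{m,k}^{20V3} = Z_{m,m+1-k}^{20V2}` for all `k = 1, …, m`. -/
theorem Phi_bijection_and_refined (m : ℕ) (hm : 1 ≤ m) :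
    Set.InjOn (Phi m) (Config m) ∧
    (∀ o ∈ Config m, IceRule m (Phi m o)) ∧
    (∀ o ∈ Config m, ∀ k : ℕ, 1 ≤ k → k ≤ m →
      HasStat m o k → HasStat m (Phi m o) (m + 1 - k)) ∧
    (∀ k : ℕ, 1 ≤ k → k ≤ m → Zref m k = Zref2 m (m + 1 - k)) := by
  refine ⟨(Phi_injective m).injOn, fun o ho => iceRule_Phi m o ho,
    fun o ho k hk1 hk2 hs => stat_Phi m hm o ho k hk1 hk2 hs, fun k hk1 hk2 => ?_⟩
  have himg : Phi m '' {o | o ∈ Config m ∧ HasStat m o k}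
      = {o | o ∈ Phi m '' Config m ∧ HasStat m o (m + 1 - k)} := by
    ext o'
    constructor
    · rintro ⟨o, ⟨hoC, hoS⟩, rfl⟩
      exact ⟨⟨o, hoC, rfl⟩, stat_Phi m hm o hoC k hk1 hk2 hoS⟩
    · rintro ⟨⟨o, hoC, rfl⟩, hS⟩
      obtain ⟨k0, hk01, hk02, hk0S⟩ := stat_exists m hm o hoC
      have h1 := stat_Phi m hm o hoC k0 hk01 hk02 hk0S
      have h2 : m + 1 - k0 = m + 1 - k :=
        stat_unique m (Phi m o) _ _ (by omega) (by omega) h1 hS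
      have h3 : k0 = k := by omega
      subst h3
      exact ⟨o, ⟨hoC, hk0S⟩, rfl⟩
  have hsub : {o | o ∈ Config m ∧ HasStat m o k} ⊆ Config m := fun o h => h.1
  rw [Zref, Zref2, show {o ∈ Config m | HasStat m o k} = {o | o ∈ Config m ∧ HasStat m o k} from rfl,
    show {o ∈ Phi m '' Config m | HasStat m o (m + 1 - k)}
      = {o | o ∈ Phi m '' Config m ∧ HasStat m o (m + 1 - k)} from rfl,
    ← himg, Set.ncard_image_of_injOn ((Phi_injective m).injOn.mono hsub)]

end TwentyV
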